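/- arXiv:2603.16787 — 2 statements merged into one kernel-verified Lean document; each statement's English description precedes it below -/
import Mathlib

section
/- Let u ∈ C²([0,L]) solve -u'' + (u+c₀)^3 - (u+c₀) + ζ = 0 on (0,L) with u(0) = 0, u'(L) = 0, where ζ : [0,L] → ℝ satisfies -1 ≤ ζ ≤ 0 and c₀ ∈ (-1,0). Then -|c₀²-1| ≤ √2 · u'(0) ≤ √(5 - 4c₀ + (c₀²-1)²). -/
open Set

private lemma quartic_nonneg (v : ℝ) : 0 ≤ v^4 - 2*v^2 - 4*v + 6 := by
  nlinarith [sq_nonneg (v^2 - v - 1), sq_nonneg (v - 1), sq_nonneg (v^2 - 1), sq_nonneg (v + 1),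
    sq_nonneg (v^2 + v - 2), sq_nonneg (v^2 - 2), sq_nonneg v]

theorem shooting_parameter_bounds (L c₀ : ℝ) (hL : 0 < L)
    (hc₀ : c₀ ∈ Ioo (-1 : ℝ) 0)
    (ζ : ℝ → ℝ) (hζcont : Continuous ζ)
    (hζ : ∀ x ∈ Icc 0 L, -1 ≤ ζ x ∧ ζ x ≤ 0)
    (u : ℝ → ℝ) (hu : ContDiff ℝ 2 u)
    (hode : ∀ x ∈ Ioo 0 L,
      -deriv (deriv u) x + (u x + c₀)^3 - (u x + c₀) + ζ x = 0)
    (hu0 : u 0 = 0) (huL : deriv u L = 0) :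
    -|c₀^2 - 1| ≤ Real.sqrt 2 * deriv u 0 ∧
      Real.sqrt 2 * deriv u 0 ≤ Real.sqrt (5 - 4*c₀ + (c₀^2 - 1)^2) := by
  obtain ⟨hc₁, hc₂⟩ := hc₀
  -- regularity
  have hreg : Differentiable ℝ u ∧ Differentiable ℝ (deriv u) ∧ Continuous (deriv u) := by
    have h : ContDiff ℝ (1 + 1 : ℕ) u := by exact_mod_cast hu
    rw [show ((1+1 : ℕ) : WithTop ℕ∞) = (1 : WithTop ℕ∞) + 1 by norm_cast] at h
    rw [contDiff_succ_iff_deriv] at h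
    exact ⟨h.1, h.2.2.differentiable one_ne_zero, h.2.2.continuous⟩
  obtain ⟨hud, hfd, hfc⟩ := hreg
  -- the energy
  set E : ℝ → ℝ := fun x => (deriv u x)^2/2 - ((u x + c₀)^4/4 - (u x + c₀)^2/2) with hEdef
  have hEx : ∀ x : ℝ, HasDerivAt E
      (deriv u x * deriv (deriv u) x - ((u x + c₀)^3 - (u x + c₀)) * deriv u x) x := by
    intro x
    have hv : HasDerivAt (fun y => u y + c₀) (deriv u x) x := (hud x).hasDerivAt.add_const c₀
    have h4 := (hv.pow 4).div_const 4
    have h2' := (hv.pow 2).div_const 2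
    have hsq := ((hfd x).hasDerivAt.pow 2).div_const 2
    have hcomb := hsq.sub (h4.sub h2')
    rw [hEdef]
    refine hcomb.congr_deriv ?_
    push_cast
    ring
  have hEdiff : Differentiable ℝ E := fun x => (hEx x).differentiableAt
  have hEIoo : ∀ x ∈ Ioo 0 L, HasDerivAt E (deriv u x * ζ x) x := by
    intro x hx
    have hDD : deriv (deriv u) x = (u x + c₀)^3 - (u x + c₀) + ζ x := by
      have := hode x hx; linarith
    have := hEx x
    rw [hDD] at this
    convert this using 1
    ring
  -- the first zero of deriv u
  set S : Set ℝ := Icc 0 L ∩ {x | deriv u x = 0} with hSdef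
  have hSc : IsClosed S := isClosed_Icc.inter (isClosed_eq hfc continuous_const)
  have hSne : S.Nonempty := ⟨L, ⟨hL.le, le_refl L⟩, huL⟩
  have hSbdd : BddBelow S := ⟨0, fun x hx => hx.1.1⟩
  set x₁ : ℝ := sInf S with hx₁def
  have hx₁S : x₁ ∈ S := hSc.csInf_mem hSne hSbdd
  obtain ⟨⟨hx₁0, hx₁L⟩, hfx₁m⟩ := hx₁S
  have hfx₁ : deriv u x₁ = 0 := hfx₁m
  have hlb : ∀ y ∈ S, x₁ ≤ y := fun y hy => csInf_le hSbdd hy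
  have hnz : ∀ y, 0 ≤ y → y < x₁ → deriv u y ≠ 0 := fun y h1 h2 hz =>
    absurd (hlb y ⟨⟨h1, h2.le.trans hx₁L⟩, hz⟩) (not_le.mpr h2)
  rcases lt_trichotomy (deriv u 0) 0 with hneg | h0 | hpos
  · -- Case A : deriv u 0 < 0
    have hx₁pos : 0 < x₁ := by
      rcases eq_or_lt_of_le hx₁0 with h | h
      · exfalso; rw [← h] at hfx₁; exact hneg.ne hfx₁
      · exact h
    have hsgn : ∀ y ∈ Icc 0 x₁, deriv u y ≤ 0 := by
      intro y hy
      by_contra hpos'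
      push_neg at hpos'
      have hy1 : y < x₁ := by
        rcases lt_or_eq_of_le hy.2 with h | h
        · exact h
        · exfalso; rw [h, hfx₁] at hpos'; exact lt_irrefl 0 hpos'
      have hmem : (0:ℝ) ∈ Icc (deriv u 0) (deriv u y) := ⟨hneg.le, hpos'.le⟩
      obtain ⟨z, hz, hz0⟩ := intermediate_value_Icc hy.1 hfc.continuousOn hmem
      exact hnz z hz.1 (lt_of_le_of_lt hz.2 hy1) hz0
    have hmono : MonotoneOn E (Icc 0 x₁) := by
      apply monotoneOn_of_deriv_nonneg (convex_Icc 0 x₁) hEdiff.continuous.continuousOn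
        hEdiff.differentiableOn
      intro x hx
      rw [interior_Icc] at hx
      have hxL : x ∈ Ioo 0 L := ⟨hx.1, lt_of_lt_of_le hx.2 hx₁L⟩
      rw [(hEIoo x hxL).deriv]
      have h1 := hsgn x ⟨hx.1.le, hx.2.le⟩
      have h2 := (hζ x ⟨hx.1.le, hx.2.le.trans hx₁L⟩).2
      nlinarith
    have hE01 : E 0 ≤ E x₁ := hmono ⟨le_refl 0, hx₁0⟩ ⟨hx₁0, le_refl x₁⟩ hx₁0
    simp only [hEdef, hu0, hfx₁] at hE01
    have key : 2 * (deriv u 0)^2 ≤ (c₀^2 - 1)^2 := by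
      nlinarith [sq_nonneg ((u x₁ + c₀)^2 - 1), hE01]
    constructor
    · nlinarith [sq_nonneg (Real.sqrt 2 * deriv u 0 + |c₀^2 - 1|), abs_nonneg (c₀^2 - 1),
        sq_abs (c₀^2 - 1), Real.sq_sqrt (by norm_num : (0:ℝ) ≤ 2), Real.sqrt_nonneg 2, key]
    · have h1 : Real.sqrt 2 * deriv u 0 ≤ 0 :=
        mul_nonpos_of_nonneg_of_nonpos (Real.sqrt_nonneg 2) hneg.le
      exact h1.trans (Real.sqrt_nonneg _)
  · -- trivial case
    rw [h0, mul_zero]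
    exact ⟨neg_nonpos.mpr (abs_nonneg _), Real.sqrt_nonneg _⟩
  · -- Case B : deriv u 0 > 0
    have hx₁pos : 0 < x₁ := by
      rcases eq_or_lt_of_le hx₁0 with h | h
      · exfalso; rw [← h] at hfx₁; exact hpos.ne' hfx₁
      · exact h
    have hsgn : ∀ y ∈ Icc 0 x₁, 0 ≤ deriv u y := by
      intro y hy
      by_contra hneg'
      push_neg at hneg'
      have hy1 : y < x₁ := by
        rcases lt_or_eq_of_le hy.2 with h | h
        · exact h
        · exfalso; rw [h, hfx₁] at hneg'; exact lt_irrefl 0 hneg'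
      have hmem : (0:ℝ) ∈ Icc (deriv u y) (deriv u 0) := ⟨hneg'.le, hpos.le⟩
      obtain ⟨z, hz, hz0⟩ := intermediate_value_Icc' hy.1 hfc.continuousOn hmem
      exact hnz z hz.1 (lt_of_le_of_lt hz.2 hy1) hz0
    set F : ℝ → ℝ := fun x => E x + u x with hFdef
    have hFdiff : Differentiable ℝ F := fun x => ((hEx x).add (hud x).hasDerivAt).differentiableAt
    have hmono : MonotoneOn F (Icc 0 x₁) := by
      apply monotoneOn_of_deriv_nonneg (convex_Icc 0 x₁) hFdiff.continuous.continuousOn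
        hFdiff.differentiableOn
      intro x hx
      rw [interior_Icc] at hx
      have hxL : x ∈ Ioo 0 L := ⟨hx.1, lt_of_lt_of_le hx.2 hx₁L⟩
      have hF : HasDerivAt F (deriv u x * ζ x + deriv u x) x :=
        (hEIoo x hxL).add (hud x).hasDerivAt
      rw [hF.deriv]
      have h1 := hsgn x ⟨hx.1.le, hx.2.le⟩
      have h2 := (hζ x ⟨hx.1.le, hx.2.le.trans hx₁L⟩).1
      nlinarith
    have hF01 : F 0 ≤ F x₁ := hmono ⟨le_refl 0, hx₁0⟩ ⟨hx₁0, le_refl x₁⟩ hx₁0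
    simp only [hFdef, hEdef, hu0, hfx₁] at hF01
    have key : 2 * (deriv u 0)^2 ≤ 5 - 4*c₀ + (c₀^2 - 1)^2 := by
      nlinarith [quartic_nonneg (u x₁ + c₀), hF01]
    constructor
    · exact le_trans (neg_nonpos.mpr (abs_nonneg _))
        (mul_nonneg (Real.sqrt_nonneg 2) hpos.le)
    · rw [Real.le_sqrt (mul_nonneg (Real.sqrt_nonneg 2) hpos.le) (by nlinarith)]
      rw [mul_pow, Real.sq_sqrt (by norm_num : (0:ℝ) ≤ 2)]
      linarith
end

section
/- Let v ∈ C²([0,1]) satisfy -v'' + L²(v³ - v + ζ̃) = 0 on (0,1) with L > 0, -1 ≤ ζ̃ ≤ 0, and suppose v attains a local minimum at some y₂ ∈ (0,1). Then v(y₂) ≥ -1. -/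
open Set

lemma second_deriv_nonneg_of_isLocalMin {f : ℝ → ℝ} (hf : ContDiff ℝ 2 f) {a : ℝ}
    (h : IsLocalMin f a) : 0 ≤ deriv (deriv f) a := by
  by_contra hneg
  push_neg at hneg
  have hf1 : ContDiff ℝ 1 (deriv f) := by
    have := (contDiff_succ_iff_deriv (n := 1)).mp (by exact_mod_cast hf)
    exact this.2.2
  have hcontf : Continuous f := hf.continuous
  have hdf : Differentiable ℝ (deriv f) := hf1.differentiable one_ne_zero
  have hcont : Continuous (deriv (deriv f)) := by
    have := (contDiff_succ_iff_deriv (n := 0)).mp (by exact_mod_cast hf1)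
    exact this.2.2.continuous
  have hda : deriv f a = 0 := h.deriv_eq_zero
  have hev : ∀ᶠ x in nhds a, deriv (deriv f) x < 0 :=
    hcont.continuousAt.eventually_lt continuousAt_const hneg
  obtain ⟨δ, hδ, hball⟩ := Metric.eventually_nhds_iff_ball.mp hev
  have hsub : Ioo (a - δ) (a + δ) ⊆ Metric.ball a δ := by
    intro x hx
    rw [Metric.mem_ball, Real.dist_eq, abs_lt]
    constructor <;> [linarith [hx.1]; linarith [hx.2]]
  have hanti : StrictAntiOn (deriv f) (Ioo (a - δ) (a + δ)) := by
    apply strictAntiOn_of_deriv_neg (convex_Ioo _ _) (hdf.continuous.continuousOn)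
    intro x hx
    rw [interior_Ioo] at hx
    exact hball x (hsub hx)
  have haI : a ∈ Ioo (a - δ) (a + δ) := ⟨by linarith, by linarith⟩
  have hpos : ∀ x ∈ Ioo (a - δ) a, 0 < deriv f x := by
    intro x hx
    have : deriv f a < deriv f x := hanti ⟨hx.1, by linarith [hx.2]⟩ haI hx.2
    linarith [hda ▸ this]
  have hmono : StrictMonoOn f (Ioc (a - δ) a) := by
    apply strictMonoOn_of_deriv_pos (convex_Ioc _ _) hcontf.continuousOn
    intro x hx
    rw [interior_Ioc] at hx
    exact hpos x hx
  have hev2 : ∀ᶠ x in nhdsWithin a (Iio a), f a ≤ f x ∧ x ∈ Ioo (a - δ) a := by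
    filter_upwards [nhdsWithin_le_nhds h,
      nhdsWithin_le_nhds (Ioo_mem_nhds (by linarith : a - δ < a) (by linarith : a < a + δ)),
      self_mem_nhdsWithin] with x h1 h2 h3
    exact ⟨h1, h2.1, h3⟩
  obtain ⟨x, hx1, hx2⟩ := hev2.exists
  have : f x < f a := hmono ⟨hx2.1, le_of_lt hx2.2⟩ ⟨by linarith [hx2.1, hδ], le_rfl⟩ hx2.2
  linarith

theorem min_bound_neg_one (L : ℝ) (hL : 0 < L)
    (ζ : ℝ → ℝ) (hζ : ∀ y ∈ Icc (0:ℝ) 1, -1 ≤ ζ y ∧ ζ y ≤ 0)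
    (v : ℝ → ℝ) (hv : ContDiff ℝ 2 v)
    (hode : ∀ y ∈ Ioo (0:ℝ) 1,
      -deriv (deriv v) y + L^2 * ((v y)^3 - v y + ζ y) = 0)
    (y₂ : ℝ) (hy₂ : y₂ ∈ Ioo (0:ℝ) 1) (hmin : IsLocalMin v y₂) :
    -1 ≤ v y₂ := by
  have h2 : 0 ≤ deriv (deriv v) y₂ := second_deriv_nonneg_of_isLocalMin hv hmin
  have hode' := hode y₂ hy₂
  have hζ' := hζ y₂ ⟨le_of_lt hy₂.1, le_of_lt hy₂.2⟩
  have hL2 : 0 < L ^ 2 := by positivity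
  have hkey : 0 ≤ (v y₂)^3 - v y₂ := by nlinarith [hζ'.2]
  by_contra hlt
  push_neg at hlt
  nlinarith [sq_nonneg (v y₂), sq_nonneg (v y₂ + 1)]
end
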